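/- For 0 < μ < 1 let S_μ = {(x, y) ∈ ℝ² : x ≥ 1, y ≥ 1, x³ y ≤ μ^{−4}, x y³ ≤ μ^{−4}}. Then lim_{μ→0⁺} μ² · area(S_μ) = 2, where area denotes two-dimensional Lebesgue measure. -/

import Mathlib

open MeasureTheory Filter Real

/-- The region of `(N, k₁)` for M-theory vacua `AdS₄ × S⁷/ℤ_{k₁}` (the `Q = 12`
case) allowed by the cutoff `μ`. -/
def ads4Q12Region (μ : ℝ) : Set (ℝ × ℝ) :=
  {x | 1 ≤ x.1 ∧ 1 ≤ x.2 ∧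
    x.1 ^ 3 * x.2 ≤ μ ^ (-(4 : ℝ)) ∧ x.1 * x.2 ^ 3 ≤ μ ^ (-(4 : ℝ))}

lemma ads4_aux_cube (z : ℝ) (hz : 0 ≤ z) : (z ^ ((1:ℝ)/3)) ^ 3 = z := by
  rw [← Real.rpow_natCast (z ^ ((1:ℝ)/3)) 3, ← Real.rpow_mul hz]
  norm_num

lemma ads4_vol_eq (μ : ℝ) (h0 : 0 < μ) (h1 : μ < 1) :
    volume (ads4Q12Region μ) =
      ENNReal.ofReal (2 * μ ^ (-(2:ℝ)) - 3 * μ ^ (-(4/3 : ℝ)) + 1) := by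
  set A : ℝ := μ ^ (-(4:ℝ)) with hAdef
  set B : ℝ := μ ^ (-(4/3:ℝ)) with hBdef
  set C : ℝ := μ ^ (-(1:ℝ)) with hCdef
  have hpow : ∀ (a : ℝ) (n : ℕ), (μ ^ a) ^ n = μ ^ (a * n) := by
    intro a n
    rw [← Real.rpow_natCast (μ ^ a) n, ← Real.rpow_mul h0.le]
  have hA1 : 1 < A := by
    rw [hAdef, Real.one_lt_rpow_iff_of_pos h0]
    exact Or.inr ⟨h1, by norm_num⟩
  have hB1 : 1 < B := by
    rw [hBdef, Real.one_lt_rpow_iff_of_pos h0]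
    exact Or.inr ⟨h1, by norm_num⟩
  have hC1 : 1 < C := by
    rw [hCdef, Real.one_lt_rpow_iff_of_pos h0]
    exact Or.inr ⟨h1, by norm_num⟩
  have hCB : C ≤ B := Real.rpow_le_rpow_of_exponent_ge h0 h1.le (by norm_num)
  have hBA : B ≤ A := Real.rpow_le_rpow_of_exponent_ge h0 h1.le (by norm_num)
  have hA0 : 0 < A := lt_trans one_pos hA1
  have hB0 : 0 < B := lt_trans one_pos hB1
  have hC0 : 0 < C := lt_trans one_pos hC1
  have hB3 : B ^ 3 = A := by rw [hBdef, hpow, hAdef]; norm_num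
  have hC8 : C ^ 8 = A ^ 2 := by
    rw [hCdef, hpow, hAdef, ← Real.rpow_natCast (μ ^ (-(4:ℝ))) 2, ← Real.rpow_mul h0.le]
    norm_num
  -- the function bounding the region from above
  set g : ℝ → ℝ := fun x => min (A / x ^ 3) ((A / x) ^ ((1:ℝ)/3)) with hgdef
  -- measurability
  have hmeas : MeasurableSet (ads4Q12Region μ) := by
    have : ads4Q12Region μ =
        ({x : ℝ × ℝ | 1 ≤ x.1} ∩ {x | 1 ≤ x.2}) ∩
        ({x | x.1 ^ 3 * x.2 ≤ A} ∩ {x | x.1 * x.2 ^ 3 ≤ A}) := by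
      ext x; simp only [ads4Q12Region, Set.mem_setOf_eq, Set.mem_inter_iff, ← hAdef]; tauto
    rw [this]
    refine MeasurableSet.inter (MeasurableSet.inter ?_ ?_) (MeasurableSet.inter ?_ ?_)
    · exact measurableSet_le measurable_const measurable_fst
    · exact measurableSet_le measurable_const measurable_snd
    · exact measurableSet_le (by fun_prop) measurable_const
    · exact measurableSet_le (by fun_prop) measurable_const
  -- slices
  have hslice : ∀ x : ℝ, volume (Prod.mk x ⁻¹' ads4Q12Region μ) =
      Set.indicator (Set.Ici 1) (fun x => ENNReal.ofReal (g x - 1)) x := by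
    intro x
    by_cases hx : (1:ℝ) ≤ x
    · have hx0 : (0:ℝ) < x := lt_of_lt_of_le one_pos hx
      have hAx0 : 0 ≤ A / x := le_of_lt (div_pos hA0 hx0)
      have hkey : Prod.mk x ⁻¹' ads4Q12Region μ = Set.Icc 1 (g x) := by
        ext y
        simp only [Set.mem_preimage, ads4Q12Region, Set.mem_setOf_eq, Set.mem_Icc, ← hAdef]
        constructor
        · rintro ⟨-, hy1, h3, h4⟩
          refine ⟨hy1, le_min ?_ ?_⟩
          · rw [le_div_iff₀ (pow_pos hx0 3)]
            calc y * x ^ 3 = x ^ 3 * y := mul_comm _ _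
            _ ≤ A := h3
          · have hy0 : (0:ℝ) ≤ y := le_trans zero_le_one hy1
            have h5 : y ^ 3 ≤ A / x := by
              rw [le_div_iff₀ hx0]
              calc y ^ 3 * x = x * y ^ 3 := mul_comm _ _
              _ ≤ A := h4
            have h6 : y ^ 3 ≤ ((A / x) ^ ((1:ℝ)/3)) ^ 3 := by
              rw [ads4_aux_cube _ hAx0]; exact h5
            exact (pow_le_pow_iff_left₀ hy0 (Real.rpow_nonneg hAx0 _) (by norm_num)).mp h6
        · rintro ⟨hy1, hy2⟩
          have hy0 : (0:ℝ) ≤ y := le_trans zero_le_one hy1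
          refine ⟨hx, hy1, ?_, ?_⟩
          · have := le_trans hy2 (min_le_left _ _)
            calc x ^ 3 * y = y * x ^ 3 := mul_comm _ _
            _ ≤ A := by rwa [← le_div_iff₀ (pow_pos hx0 3)]
          · have h5 : y ≤ (A / x) ^ ((1:ℝ)/3) := le_trans hy2 (min_le_right _ _)
            have h6 : y ^ 3 ≤ A / x := by
              calc y ^ 3 ≤ ((A / x) ^ ((1:ℝ)/3)) ^ 3 :=
                pow_le_pow_left₀ hy0 h5 3
              _ = A / x := ads4_aux_cube _ hAx0
            calc x * y ^ 3 = y ^ 3 * x := mul_comm _ _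
            _ ≤ A := by rwa [← le_div_iff₀ hx0]
      rw [hkey, Real.volume_Icc, Set.indicator_of_mem (Set.mem_Ici.mpr hx)]
    · have hkey : Prod.mk x ⁻¹' ads4Q12Region μ = ∅ := by
        ext y
        simp only [Set.mem_preimage, ads4Q12Region, Set.mem_setOf_eq, Set.mem_empty_iff_false,
          iff_false]
        rintro ⟨h, -⟩; exact hx h
      rw [hkey, measure_empty, Set.indicator_of_notMem (fun h => hx (Set.mem_Ici.mp h))]
  -- Fubini
  have hfub : volume (ads4Q12Region μ) = ∫⁻ x in Set.Ici 1, ENNReal.ofReal (g x - 1) := by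
    rw [Measure.volume_eq_prod ℝ ℝ, Measure.prod_apply hmeas]
    rw [lintegral_congr hslice, lintegral_indicator measurableSet_Ici]
  rw [hfub]
  -- split the domain
  have hsplit : Set.Ici (1:ℝ) = Set.Icc 1 B ∪ Set.Ioi B := (Set.Icc_union_Ioi_eq_Ici hB1.le).symm
  have hdisj : Disjoint (Set.Icc (1:ℝ) B) (Set.Ioi B) := by
    rw [Set.disjoint_left]
    rintro x ⟨-, hxB⟩ hx
    exact absurd hx (not_lt.mpr hxB)
  rw [hsplit, lintegral_union measurableSet_Ioi hdisj]
  -- the tail vanishes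
  have htail : ∫⁻ x in Set.Ioi B, ENNReal.ofReal (g x - 1) = 0 := by
    rw [setLIntegral_congr_fun measurableSet_Ioi
      (fun x (hx : B < x) => ?_), lintegral_zero]
    have hx0 : (0:ℝ) < x := lt_trans hB0 hx
    have h1x : A / x ^ 3 ≤ 1 := by
      rw [div_le_one (pow_pos hx0 3), ← hB3]
      exact pow_le_pow_left₀ hB0.le hx.le 3
    have : g x ≤ 1 := le_trans (min_le_left _ _) h1x
    simp [ENNReal.ofReal_eq_zero]
    linarith
  rw [htail, add_zero]
  -- continuity and integrability on [1, B]
  have c1 : ContinuousOn (fun x : ℝ => A / x ^ 3) (Set.Icc 1 B) := by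
    apply ContinuousOn.div continuousOn_const (Continuous.continuousOn (continuous_pow 3))
    intro x hx
    exact pow_ne_zero 3 (ne_of_gt (lt_of_lt_of_le one_pos hx.1))
  have c2 : ContinuousOn (fun x : ℝ => (A / x) ^ ((1:ℝ)/3)) (Set.Icc 1 B) := by
    apply ContinuousOn.rpow_const
    · apply ContinuousOn.div continuousOn_const continuousOn_id
      intro x hx
      exact ne_of_gt (lt_of_lt_of_le one_pos hx.1)
    · intro x hx
      exact Or.inr (by norm_num)
  have hgcont : ContinuousOn (fun x => g x - 1) (Set.Icc 1 B) :=
    ContinuousOn.sub (ContinuousOn.inf c1 c2) continuousOn_const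
  have hint : IntegrableOn (fun x => g x - 1) (Set.Icc 1 B) :=
    ContinuousOn.integrableOn_compact isCompact_Icc hgcont
  -- nonnegativity on [1, B]
  have hnn : 0 ≤ᵐ[volume.restrict (Set.Icc 1 B)] fun x => g x - 1 := by
    refine ae_restrict_of_forall_mem measurableSet_Icc (fun x hx => ?_)
    have hx0 : (0:ℝ) < x := lt_of_lt_of_le one_pos hx.1
    have h1 : 1 ≤ A / x ^ 3 := by
      rw [le_div_iff₀ (pow_pos hx0 3), one_mul, ← hB3]
      exact pow_le_pow_left₀ hx0.le hx.2 3
    have h2 : 1 ≤ (A / x) ^ ((1:ℝ)/3) := by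
      have hAx : 1 ≤ A / x := by
        rw [le_div_iff₀ hx0, one_mul]
        exact le_trans hx.2 hBA
      calc (1:ℝ) = 1 ^ ((1:ℝ)/3) := (Real.one_rpow _).symm
      _ ≤ (A / x) ^ ((1:ℝ)/3) := Real.rpow_le_rpow zero_le_one hAx (by norm_num)
    have : 1 ≤ g x := le_min h1 h2
    simp only [Pi.zero_apply]
    linarith
  rw [← ofReal_integral_eq_lintegral_ofReal hint hnn]
  congr 1
  -- pass to an interval integral
  rw [MeasureTheory.integral_Icc_eq_integral_Ioc, ← intervalIntegral.integral_of_le hB1.le]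
  -- split at C
  have hi1 : IntervalIntegrable (fun x => g x - 1) volume 1 C := by
    apply ContinuousOn.intervalIntegrable
    apply hgcont.mono
    rw [Set.uIcc_of_le hC1.le]
    exact Set.Icc_subset_Icc le_rfl hCB
  have hi2 : IntervalIntegrable (fun x => g x - 1) volume C B := by
    apply ContinuousOn.intervalIntegrable
    apply hgcont.mono
    rw [Set.uIcc_of_le hCB]
    exact Set.Icc_subset_Icc hC1.le le_rfl
  rw [← intervalIntegral.integral_add_adjacent_intervals hi1 hi2]
  -- first piece: g = B * x ^ (-1/3)
  have e1 : ∫ x in (1:ℝ)..C, (g x - 1) =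
      ∫ x in (1:ℝ)..C, (B * x ^ (-(1:ℝ)/3) - 1) := by
    apply intervalIntegral.integral_congr
    intro x hx
    show g x - 1 = B * x ^ (-(1:ℝ)/3) - 1
    rw [Set.uIcc_of_le hC1.le] at hx
    have hx0 : (0:ℝ) < x := lt_of_lt_of_le one_pos hx.1
    have hmin : g x = (A / x) ^ ((1:ℝ)/3) := by
      apply min_eq_right
      have hcube : ((A / x) ^ ((1:ℝ)/3)) ^ 3 ≤ (A / x ^ 3) ^ 3 := by
        rw [ads4_aux_cube _ (le_of_lt (div_pos hA0 hx0)), div_pow,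
          div_le_div_iff₀ hx0 (pow_pos (pow_pos hx0 3) 3)]
        have hx9 : x ^ 9 ≤ A ^ 2 * x := by
          calc x ^ 9 = x ^ 8 * x := by ring
          _ ≤ C ^ 8 * x := by
            have := pow_le_pow_left₀ hx0.le hx.2 8
            nlinarith
          _ = A ^ 2 * x := by rw [hC8]
        calc A * (x ^ 3) ^ 3 = A * x ^ 9 := by ring
        _ ≤ A * (A ^ 2 * x) := by nlinarith
        _ = A ^ 3 * x := by ring
      exact (pow_le_pow_iff_left₀ (Real.rpow_nonneg (le_of_lt (div_pos hA0 hx0)) _)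
        (le_of_lt (div_pos hA0 (pow_pos hx0 3))) (by norm_num)).mp hcube
    rw [hmin, Real.div_rpow hA0.le hx0.le]
    have hA13 : A ^ ((1:ℝ)/3) = B := by
      rw [hAdef, hBdef, ← Real.rpow_mul h0.le]
      norm_num
    rw [hA13, neg_div, Real.rpow_neg hx0.le, div_eq_mul_inv]
  -- second piece: g = A * x ^ (-3)
  have e2 : ∫ x in C..B, (g x - 1) = ∫ x in C..B, (A * x ^ (-(3:ℝ)) - 1) := by
    apply intervalIntegral.integral_congr
    intro x hx
    show g x - 1 = A * x ^ (-(3:ℝ)) - 1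
    rw [Set.uIcc_of_le hCB] at hx
    have hx0 : (0:ℝ) < x := lt_of_lt_of_le hC0 hx.1
    have hmin : g x = A / x ^ 3 := by
      apply min_eq_left
      have hcube : (A / x ^ 3) ^ 3 ≤ ((A / x) ^ ((1:ℝ)/3)) ^ 3 := by
        rw [ads4_aux_cube _ (le_of_lt (div_pos hA0 hx0)), div_pow,
          div_le_div_iff₀ (pow_pos (pow_pos hx0 3) 3) hx0]
        have hx9 : A ^ 2 * x ≤ x ^ 9 := by
          calc A ^ 2 * x = C ^ 8 * x := by rw [hC8]
          _ ≤ x ^ 8 * x := by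
            have := pow_le_pow_left₀ hC0.le hx.1 8
            nlinarith
          _ = x ^ 9 := by ring
        calc A ^ 3 * x = A * (A ^ 2 * x) := by ring
        _ ≤ A * x ^ 9 := by nlinarith
        _ = A * (x ^ 3) ^ 3 := by ring
      exact (pow_le_pow_iff_left₀ (le_of_lt (div_pos hA0 (pow_pos hx0 3)))
        (Real.rpow_nonneg (le_of_lt (div_pos hA0 hx0)) _) (by norm_num)).mp hcube
    have hx3 : x ^ (-(3:ℝ)) = (x ^ 3)⁻¹ := by
      rw [Real.rpow_neg hx0.le, ← Real.rpow_natCast x 3]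
      norm_num
    rw [hmin, hx3, div_eq_mul_inv]
  rw [e1, e2]
  -- compute both integrals
  have j1 : ∫ x in (1:ℝ)..C, (B * x ^ (-(1:ℝ)/3) - 1) =
      B * ((C ^ ((-(1:ℝ)/3) + 1) - 1) / ((-(1:ℝ)/3) + 1)) - (C - 1) := by
    rw [intervalIntegral.integral_sub
      (((intervalIntegral.intervalIntegrable_rpow' (by norm_num)).const_mul B))
      intervalIntegrable_const,
      intervalIntegral.integral_const_mul,
      integral_rpow (Or.inl (by norm_num)),
      intervalIntegral.integral_const, smul_eq_mul, mul_one, Real.one_rpow]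
  have j2 : ∫ x in C..B, (A * x ^ (-(3:ℝ)) - 1) =
      A * ((B ^ ((-(3:ℝ)) + 1) - C ^ ((-(3:ℝ)) + 1)) / ((-(3:ℝ)) + 1)) - (B - C) := by
    have hnm : (0:ℝ) ∉ Set.uIcc C B := by
      rw [Set.uIcc_of_le hCB]
      rintro ⟨h, -⟩
      exact absurd h (not_le.mpr hC0)
    rw [intervalIntegral.integral_sub
      (((intervalIntegral.intervalIntegrable_rpow (Or.inr hnm)).const_mul A))
      intervalIntegrable_const,
      intervalIntegral.integral_const_mul,
      integral_rpow (Or.inr ⟨by norm_num, hnm⟩),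
      intervalIntegral.integral_const, smul_eq_mul, mul_one]
  rw [j1, j2]
  -- final algebra: substitute u = μ^(-1/3)
  set u : ℝ := μ ^ (-(1:ℝ)/3) with hudef
  have hu0 : 0 < u := Real.rpow_pos_of_pos h0 _
  have hu : ∀ (a : ℝ) (n : ℕ), a = -(1:ℝ)/3 * n → μ ^ a = u ^ n := by
    intro a n ha
    rw [hudef, hpow, ← ha]
  have hAu : A = u ^ 12 := hu _ 12 (by norm_num)
  have hBu : B = u ^ 4 := hu _ 4 (by norm_num)
  have hCu : C = u ^ 3 := hu _ 3 (by norm_num)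
  have hC23 : C ^ ((-(1:ℝ)/3) + 1) = u ^ 2 := by
    rw [hCdef, ← Real.rpow_mul h0.le]
    exact hu _ 2 (by norm_num)
  have hB2 : B ^ (-(3:ℝ) + 1) = (u ^ 8)⁻¹ := by
    have h8 : (u:ℝ) ^ 8 = μ ^ (-(8:ℝ)/3) := (hu _ 8 (by norm_num)).symm
    rw [hBdef, ← Real.rpow_mul h0.le, h8, ← Real.rpow_neg h0.le]
    norm_num
  have hC2 : C ^ (-(3:ℝ) + 1) = (u ^ 6)⁻¹ := by
    have h6 : (u:ℝ) ^ 6 = μ ^ (-(6:ℝ)/3) := (hu _ 6 (by norm_num)).symm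
    rw [hCdef, ← Real.rpow_mul h0.le, h6, ← Real.rpow_neg h0.le]
    norm_num
  have hm2 : μ ^ (-(2:ℝ)) = u ^ 6 := hu _ 6 (by norm_num)
  rw [hC23, hB2, hC2, hm2, hAu, hBu, hCu]
  have hune : u ≠ 0 := ne_of_gt hu0
  field_simp
  ring

/-- The continuum count `𝔑^{(Q=12)}_{AdS₄}(μ)` is asymptotic to `2 μ^{−2}`:
`lim_{μ→0⁺} μ² · area(S_μ) = 2`. -/
theorem ads4_Q12_count_asymptotics :
    Tendsto (fun μ : ℝ => μ ^ 2 * (volume (ads4Q12Region μ)).toReal)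
      (nhdsWithin 0 (Set.Ioi 0)) (nhds 2) := by
  have hlim : Tendsto (fun μ : ℝ => 2 - 3 * μ ^ ((2:ℝ)/3) + μ ^ 2)
      (nhdsWithin 0 (Set.Ioi 0)) (nhds 2) := by
    have h1 : Tendsto (fun μ : ℝ => μ ^ ((2:ℝ)/3)) (nhdsWithin 0 (Set.Ioi 0)) (nhds 0) := by
      have := (Real.continuousAt_rpow_const 0 ((2:ℝ)/3) (Or.inr (by norm_num))).tendsto
      rw [Real.zero_rpow (by norm_num)] at this
      exact this.mono_left nhdsWithin_le_nhds
    have h2 : Tendsto (fun μ : ℝ => μ ^ 2) (nhdsWithin 0 (Set.Ioi 0)) (nhds 0) := by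
      have := ((continuous_pow 2).tendsto (0:ℝ)).mono_left
        (nhdsWithin_le_nhds (s := Set.Ioi (0:ℝ)))
      simpa using this
    have := ((tendsto_const_nhds (x := (2:ℝ))).sub (h1.const_mul 3)).add h2
    simpa using this
  apply hlim.congr'
  filter_upwards [Ioo_mem_nhdsGT_of_mem (by norm_num : (0:ℝ) ∈ Set.Ico 0 1)] with μ hμ
  obtain ⟨h0, h1⟩ := hμ
  rw [ads4_vol_eq μ h0 h1]
  set u : ℝ := μ ^ (-(1:ℝ)/3) with hudef
  have hu0 : 0 < u := Real.rpow_pos_of_pos h0 _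
  have hu1 : 1 < u := by
    rw [hudef, Real.one_lt_rpow_iff_of_pos h0]
    exact Or.inr ⟨h1, by norm_num⟩
  have hu : ∀ (a : ℝ) (n : ℕ), a = -(1:ℝ)/3 * n → μ ^ a = u ^ n := by
    intro a n ha
    rw [hudef, ← Real.rpow_natCast (μ ^ (-(1:ℝ)/3)) n, ← Real.rpow_mul h0.le, ← ha]
  have hm2 : μ ^ (-(2:ℝ)) = u ^ 6 := hu _ 6 (by norm_num)
  have hm43 : μ ^ (-(4/3:ℝ)) = u ^ 4 := hu _ 4 (by norm_num)
  have hE : 2 * μ ^ (-(2:ℝ)) - 3 * μ ^ (-(4/3:ℝ)) + 1 =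
      (u ^ 2 - 1) ^ 2 * (2 * u ^ 2 + 1) := by
    rw [hm2, hm43]; ring
  rw [ENNReal.toReal_ofReal (by nlinarith [hE, sq_nonneg (u ^ 2 - 1)])]
  rw [hE]
  -- μ^2 * ((u²-1)²(2u²+1)) = 2 - 3 μ^{2/3} + μ^2
  have hμ2 : μ ^ 2 = (u ^ 6)⁻¹ := by
    rw [← Real.rpow_natCast μ 2, ← hm2, ← Real.rpow_neg h0.le]
    norm_num
  have hμ23 : μ ^ ((2:ℝ)/3) = (u ^ 2)⁻¹ := by
    have := hu (-(2:ℝ)/3) 2 (by norm_num)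
    rw [← this, ← Real.rpow_neg h0.le]
    norm_num
  rw [hμ2, hμ23]
  have hune : u ≠ 0 := ne_of_gt hu0
  field_simp
  ring
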